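/- For every real k with 0 < k² < 1, ∫₀¹ x·arccos(x)/sqrt(1-k²x²) dx = (1/k²)·(π/2 - E(k)). -/

import Mathlib

open Real MeasureTheory intervalIntegral Set

set_option maxHeartbeats 1000000 in
theorem stmt_10 (k : ℝ) (hk0 : 0 < k ^ 2) (hk1 : k ^ 2 < 1) :
    ∫ x in (0:ℝ)..1, x * Real.arccos x / Real.sqrt (1 - k ^ 2 * x ^ 2) =
      (1 / k ^ 2) * (Real.pi / 2 -
        ∫ x in (0:ℝ)..1, Real.sqrt ((1 - k ^ 2 * x ^ 2) / (1 - x ^ 2))) := by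
  have hkne : (k:ℝ) ^ 2 ≠ 0 := ne_of_gt hk0
  set f : ℝ → ℝ := fun x => x * Real.arccos x / Real.sqrt (1 - k ^ 2 * x ^ 2) with hf
  set g : ℝ → ℝ := fun x => Real.sqrt ((1 - k ^ 2 * x ^ 2) / (1 - x ^ 2)) with hg
  set G : ℝ → ℝ := fun x => Real.arccos x * Real.sqrt (1 - k ^ 2 * x ^ 2) / k ^ 2 with hG
  -- positivity of 1 - k^2 x^2 on [0,1]
  have hpos : ∀ x : ℝ, x ∈ Icc (0:ℝ) 1 → 0 < 1 - k ^ 2 * x ^ 2 := by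
    intro x hx
    have hx2 : x ^ 2 ≤ 1 := by nlinarith [hx.1, hx.2]
    nlinarith
  -- f is interval integrable (continuous on [0,1])
  have hf_int : IntervalIntegrable f volume 0 1 := by
    apply ContinuousOn.intervalIntegrable
    rw [uIcc_of_le (by norm_num)]
    apply ContinuousOn.div
    · exact (continuous_id.mul Real.continuous_arccos).continuousOn
    · exact (Real.continuous_sqrt.comp (by continuity)).continuousOn
    · intro x hx
      exact ne_of_gt (Real.sqrt_pos.mpr (hpos x hx))
  -- g is interval integrable by comparison with (1-x)^(-1/2)
  have hm_int : IntervalIntegrable (fun x : ℝ => (1 - x) ^ (-(1/2) : ℝ)) volume 0 1 := by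
    have := (intervalIntegrable_rpow' (a := 0) (b := 1)
      (r := (-(1/2) : ℝ)) (by norm_num)).comp_sub_left 1
    simpa using this.symm
  have hg_int : IntervalIntegrable g volume 0 1 := by
    apply hm_int.mono_fun'
    · exact (Real.continuous_sqrt.measurable.comp
        (by measurability : Measurable fun x : ℝ => (1 - k ^ 2 * x ^ 2) / (1 - x ^ 2))).aestronglyMeasurable
    · rw [uIoc_of_le (by norm_num : (0:ℝ) ≤ 1)]
      filter_upwards [ae_restrict_mem measurableSet_Ioc] with x hx
      have hx0 : 0 < x := hx.1
      have hx1 : x ≤ 1 := hx.2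
      rcases eq_or_lt_of_le hx1 with h1 | h1
      · subst h1
        norm_num [hg, Real.zero_rpow]
      · have h1x : 0 < 1 - x := by linarith
        have hrw : (1 - x) ^ (-(1/2) : ℝ) = (Real.sqrt (1 - x))⁻¹ := by
          rw [Real.rpow_neg h1x.le, Real.sqrt_eq_rpow]
        rw [hrw, hg]
        have hq : (1 - k ^ 2 * x ^ 2) / (1 - x ^ 2) ≤ 1 / (1 - x) := by
          rw [div_le_div_iff₀ (by nlinarith) h1x]
          nlinarith [mul_nonneg h1x.le (add_nonneg (mul_nonneg hk0.le (sq_nonneg x)) hx0.le)]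
        calc ‖Real.sqrt ((1 - k ^ 2 * x ^ 2) / (1 - x ^ 2))‖
            = Real.sqrt ((1 - k ^ 2 * x ^ 2) / (1 - x ^ 2)) := by
              rw [Real.norm_eq_abs, abs_of_nonneg (Real.sqrt_nonneg _)]
          _ ≤ Real.sqrt (1 / (1 - x)) := Real.sqrt_le_sqrt hq
          _ = (Real.sqrt (1 - x))⁻¹ := by
              rw [one_div, Real.sqrt_inv]
  -- derivative of G on (0,1)
  have hderiv : ∀ x ∈ Ioo (0:ℝ) 1, HasDerivAt G (-(f x + (1 / k ^ 2) * g x)) x := by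
    intro x hx
    have hx1 : x ≠ 1 := ne_of_lt hx.2
    have hxm1 : x ≠ -1 := by intro h; rw [h] at hx; linarith [hx.1]
    have hxIcc : x ∈ Icc (0:ℝ) 1 := ⟨hx.1.le, hx.2.le⟩
    have hp : 0 < 1 - k ^ 2 * x ^ 2 := hpos x hxIcc
    have hq : 0 < 1 - x ^ 2 := by nlinarith [hx.1, hx.2]
    have h1 : HasDerivAt Real.arccos (-(1 / Real.sqrt (1 - x ^ 2))) x :=
      Real.hasDerivAt_arccos hxm1 hx1
    have h2 : HasDerivAt (fun y : ℝ => 1 - k ^ 2 * y ^ 2) (-(k ^ 2 * (2 * x))) x := by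
      have := ((hasDerivAt_pow 2 x).const_mul (k ^ 2)).const_sub 1
      simpa using this
    have h3 : HasDerivAt (fun y : ℝ => Real.sqrt (1 - k ^ 2 * y ^ 2))
        (1 / (2 * Real.sqrt (1 - k ^ 2 * x ^ 2)) * (-(k ^ 2 * (2 * x)))) x :=
      (Real.hasDerivAt_sqrt (ne_of_gt hp)).comp x h2
    have h4 := (h1.mul h3).div_const (k ^ 2)
    convert h4 using 1
    case e'_4 => rfl
    case e'_5 => rfl
    case e'_8 => rfl
    have hs1 : Real.sqrt (1 - x ^ 2) ≠ 0 := ne_of_gt (Real.sqrt_pos.mpr hq)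
    have hs2 : Real.sqrt (1 - k ^ 2 * x ^ 2) ≠ 0 := ne_of_gt (Real.sqrt_pos.mpr hp)
    have e1 : Real.sqrt (1 - x ^ 2) * Real.sqrt (1 - x ^ 2) = 1 - x ^ 2 :=
      Real.mul_self_sqrt hq.le
    have e2 : Real.sqrt (1 - k ^ 2 * x ^ 2) * Real.sqrt (1 - k ^ 2 * x ^ 2)
        = 1 - k ^ 2 * x ^ 2 := Real.mul_self_sqrt hp.le
    have e3 : g x = Real.sqrt (1 - k ^ 2 * x ^ 2) / Real.sqrt (1 - x ^ 2) := by
      rw [hg]; exact Real.sqrt_div hp.le _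
    rw [hf, e3]
    have hk : k ≠ 0 := by rintro rfl; simp at hkne
    field_simp
    ring
  -- FTC
  have hGcont : ContinuousOn G (Icc 0 1) := by
    apply Continuous.continuousOn
    exact ((Real.continuous_arccos.mul (Real.continuous_sqrt.comp (by continuity))).div_const _)
  have hD_int : IntervalIntegrable (fun x => -(f x + (1 / k ^ 2) * g x)) volume 0 1 :=
    (hf_int.add (hg_int.const_mul _)).neg
  have hftc : ∫ x in (0:ℝ)..1, -(f x + (1 / k ^ 2) * g x) = G 1 - G 0 :=
    integral_eq_sub_of_hasDeriv_right_of_le (by norm_num) hGcont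
      (fun x hx => (hderiv x hx).hasDerivWithinAt) hD_int
  have hG1 : G 1 = 0 := by simp [hG, Real.arccos_one]
  have hG0 : G 0 = Real.pi / 2 / k ^ 2 := by
    simp [hG, Real.arccos_zero]
  rw [intervalIntegral.integral_neg, intervalIntegral.integral_add hf_int (hg_int.const_mul _),
    intervalIntegral.integral_const_mul, hG1, hG0] at hftc
  linear_combination -hftc
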